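/- arXiv:2012.00851 — 5 statements merged into one kernel-verified Lean document; each statement's English description precedes it below -/
import Mathlib

section
/- Let G be a finite, connected, non-bipartite undirected graph without loops on vertex set V. Then there is no independent set I of G such that E(E(I)) = I, where E(A) denotes the set of vertices adjacent to at least one vertex of A. -/
open Finset

/-- A finset of vertices is independent: no two of its members are adjacent. -/
def IsIndep {V : Type*} (G : SimpleGraph V) (I : Finset V) : Prop :=
  ∀ i ∈ I, ∀ j ∈ I, ¬ G.Adj i j

/-- The set of neighbors of at least one vertex of `A`. -/
def nbhd {V : Type*} [Fintype V] [DecidableEq V] (G : SimpleGraph V) [DecidableRel G.Adj]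
    (A : Finset V) : Finset V :=
  A.biUnion fun i => G.neighborFinset i

lemma mem_nbhd {V : Type*} [Fintype V] [DecidableEq V] (G : SimpleGraph V) [DecidableRel G.Adj]
    (A : Finset V) (v : V) : v ∈ nbhd G A ↔ ∃ i ∈ A, G.Adj i v := by
  simp [nbhd, SimpleGraph.adj_comm]

/-- In a finite connected non-bipartite graph, there is no (nonempty) independent set `I`
with `E(E(I)) = I`. -/
theorem stmt0 {V : Type*} [Fintype V] [DecidableEq V] (G : SimpleGraph V) [DecidableRel G.Adj]
    (hconn : G.Connected) (hnb : ¬ G.Colorable 2) :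
    ¬ ∃ I : Finset V, I.Nonempty ∧ IsIndep G I ∧ nbhd G (nbhd G I) = I := by
  rintro ⟨I, ⟨i0, hi0⟩, hind, hEE⟩
  set J := nbhd G I with hJ
  -- J is independent
  have hJind : IsIndep G J := by
    intro u hu v hv huv
    have hu' : u ∈ I := by rw [← hEE, mem_nbhd]; exact ⟨v, hv, huv.symm⟩
    have hv' : v ∈ I := by rw [← hEE, mem_nbhd]; exact ⟨u, hu, huv⟩
    exact hind u hu' v hv' huv
  -- closure step
  have hstep : ∀ a b : V, G.Adj a b → (a ∈ I ∨ a ∈ J) → (b ∈ I ∨ b ∈ J) := by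
    rintro a b hab (ha | ha)
    · exact Or.inr ((mem_nbhd G I b).mpr ⟨a, ha, hab⟩)
    · exact Or.inl (by rw [← hEE, mem_nbhd]; exact ⟨a, ha, hab⟩)
  have key : ∀ (a v : V), G.Walk a v → (a ∈ I ∨ a ∈ J) → (v ∈ I ∨ v ∈ J) := by
    intro a v w
    induction w with
    | nil => exact id
    | cons h _ ih => exact fun ha => ih (hstep _ _ h ha)
  have hcover : ∀ v : V, v ∈ I ∨ v ∈ J := fun v => by
    obtain ⟨w⟩ := hconn i0 v
    exact key i0 v w (Or.inl hi0)
  -- build a 2-coloring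
  apply hnb
  refine ⟨SimpleGraph.Coloring.mk (fun v => if v ∈ I then 0 else 1) ?_⟩
  intro u v huv
  by_cases hu : u ∈ I <;> by_cases hv : v ∈ I <;> simp [hu, hv]
  · exact absurd huv (hind u hu v hv)
  · have hu' : u ∈ J := (hcover u).resolve_left hu
    have hv' : v ∈ J := (hcover v).resolve_left hv
    exact absurd huv (hJind u hu' v hv')
end

section
/- Let G be a finite, connected, non-bipartite simple graph on vertex set V, and let A = (a_{i,j}) be a symmetric nonnegative matrix with a_{i,j} > 0 if and only if i and j are adjacent in G. Define weights d_i = Σ_{j ∈ N(i)} a_{i,j} and arrival rates α_i = d_i / Σ_{j ∈ V} d_j. Then for every nonempty independent set I of G, Σ_{i ∈ I} α_i < Σ_{j ∈ E(I)} α_j, where E(I) is the set of neighbors of I. -/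
open Finset

/-- Degree-proportional (weighted) arrival rates satisfy the stability condition:
for every nonempty independent set `I`, `α(I) < α(E(I))`. -/
theorem stmt1 {V : Type*} [Fintype V] [DecidableEq V] (G : SimpleGraph V) [DecidableRel G.Adj]
    (hconn : G.Connected) (hnb : ¬ G.Colorable 2)
    (A : V → V → ℝ)
    (hsymm : ∀ i j, A i j = A j i)
    (hpos : ∀ i j, 0 < A i j ↔ G.Adj i j)
    (hnonneg : ∀ i j, 0 ≤ A i j)
    (d : V → ℝ) (hd : ∀ i, d i = ∑ j ∈ G.neighborFinset i, A i j)
    (α : V → ℝ) (hα : ∀ i, α i = d i / ∑ j, d j) :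
    ∀ I : Finset V, I.Nonempty → IsIndep G I →
      ∑ i ∈ I, α i < ∑ j ∈ nbhd G I, α j := by
  intro I hne hind
  -- A is zero off edges
  have hzero : ∀ i j, ¬ G.Adj i j → A i j = 0 := by
    intro i j h
    exact le_antisymm (not_lt.mp (fun hp => h ((hpos i j).mp hp))) (hnonneg i j)
  -- d as full sum
  have hdfull : ∀ i, d i = ∑ j, A i j := by
    intro i
    rw [hd i]
    exact Finset.sum_subset (Finset.subset_univ _) (fun j _ hj =>
      hzero i j (fun h => hj ((SimpleGraph.mem_neighborFinset G i j).mpr h)))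
  have hdnonneg : ∀ i, 0 ≤ d i := fun i => by
    rw [hdfull i]; exact Finset.sum_nonneg fun j _ => hnonneg i j
  -- key combinatorial fact: some vertex in nbhd I has a neighbor outside I
  have hkey : ∃ j ∈ nbhd G I, ∃ k, G.Adj j k ∧ k ∉ I := by
    by_contra hcon
    push_neg at hcon
    -- then every vertex is in I ∪ nbhd I
    have hstep : ∀ u, (u ∈ I ∨ u ∈ nbhd G I) → ∀ w, G.Adj u w → (w ∈ I ∨ w ∈ nbhd G I) := by
      intro u hu w hadj
      rcases hu with hu | hu
      · right
        exact Finset.mem_biUnion.mpr ⟨u, hu, (SimpleGraph.mem_neighborFinset G u w).mpr hadj⟩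
      · left; exact hcon u hu w hadj
    have hall : ∀ v, v ∈ I ∨ v ∈ nbhd G I := by
      obtain ⟨i0, hi0⟩ := hne
      intro v
      obtain ⟨p⟩ := hconn.preconnected i0 v
      have : ∀ u v, G.Walk u v → (u ∈ I ∨ u ∈ nbhd G I) → (v ∈ I ∨ v ∈ nbhd G I) := by
        intro u v p
        induction p with
        | nil => exact id
        | cons h q ih => exact fun hu => ih (hstep _ hu _ h)
      exact this i0 v p (Or.inl hi0)
    -- build a 2-coloring
    refine hnb ⟨SimpleGraph.Coloring.mk (fun v => if v ∈ I then 0 else 1) ?_⟩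
    intro u v hadj
    by_cases hu : u ∈ I <;> by_cases hv : v ∈ I <;> simp [hu, hv]
    · exact hind u hu v hv hadj
    · exact hv ((hall u).resolve_left hu |> fun hu' => hcon u hu' v hadj)
  obtain ⟨j0, hj0, k0, hjk, hk0⟩ := hkey
  -- total sum positive
  have hdj0 : 0 < d j0 := by
    rw [hd j0]
    exact Finset.sum_pos' (fun j _ => hnonneg j0 j)
      ⟨k0, (SimpleGraph.mem_neighborFinset G j0 k0).mpr hjk, (hpos j0 k0).mpr hjk⟩
  have hT : 0 < ∑ j, d j :=
    lt_of_lt_of_le hdj0 (Finset.single_le_sum (fun i _ => hdnonneg i) (Finset.mem_univ j0))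
  -- main inequality on d
  have hmain : ∑ i ∈ I, d i < ∑ j ∈ nbhd G I, d j := by
    have h1 : ∑ i ∈ I, d i = ∑ j ∈ nbhd G I, ∑ i ∈ I, A j i := by
      have : ∀ i ∈ I, d i = ∑ j ∈ nbhd G I, A i j := by
        intro i hi
        rw [hd i]
        refine Finset.sum_subset ?_ (fun j _ hj => hzero i j (fun h => hj
          ((SimpleGraph.mem_neighborFinset G i j).mpr h)))
        intro j hj
        exact Finset.mem_biUnion.mpr ⟨i, hi, hj⟩
      rw [Finset.sum_congr rfl this, Finset.sum_comm]
      exact Finset.sum_congr rfl fun j _ => Finset.sum_congr rfl fun i _ => hsymm i j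
    rw [h1]
    refine Finset.sum_lt_sum (fun j hj => ?_) ⟨j0, hj0, ?_⟩
    · rw [hdfull j]
      exact Finset.sum_le_sum_of_subset_of_nonneg (Finset.subset_univ _)
        (fun i _ _ => hnonneg j i)
    · rw [hdfull j0]
      exact Finset.sum_lt_sum_of_subset (Finset.subset_univ _) (Finset.mem_univ k0) hk0
        ((hpos j0 k0).mpr hjk) (fun i _ _ => hnonneg j0 i)
  -- conclude for α
  simp only [hα, ← Finset.sum_div]
  exact div_lt_div_of_pos_right hmain hT
end

section
/- Let G be the cycle graph on N = 2K+1 vertices (K ≥ 1). Then every nonempty independent set I of G satisfies |E(I)| ≥ |I| + 1, where E(I) denotes the set of neighbors of vertices of I. -/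
open Finset

/-- The cycle graph on `ZMod N`: `i` adjacent to `i ± 1`. -/
def cycleGraph (N : ℕ) : SimpleGraph (ZMod N) where
  Adj i j := i ≠ j ∧ (i + 1 = j ∨ j + 1 = i)
  symm := by
    refine ⟨?_⟩
    rintro i j ⟨h1, h2⟩
    exact ⟨h1.symm, h2.symm⟩
  loopless := ⟨by rintro i ⟨h1, _⟩; exact h1 rfl⟩

theorem aux (N : ℕ) [NeZero N] (h3 : 3 ≤ N) (hodd : Odd N)
    [DecidableRel (cycleGraph N).Adj]
    (I : Finset (ZMod N)) (hne : I.Nonempty)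
    (hind : IsIndep (cycleGraph N) I) :
    I.card + 1 ≤ (nbhd (cycleGraph N) I).card := by
  haveI : Fact (1 < N) := ⟨by omega⟩
  have h10 : (1 : ZMod N) ≠ 0 := one_ne_zero
  set A := I.image (· + 1) with hA
  set B := I.image (· - 1) with hB
  have hnbhd : nbhd (cycleGraph N) I = A ∪ B := by
    ext x
    simp only [nbhd, mem_biUnion, SimpleGraph.mem_neighborFinset, mem_union, hA, hB,
      mem_image]
    simp only [cycleGraph]
    constructor
    · rintro ⟨i, hi, -, h | h⟩
      · exact Or.inl ⟨i, hi, h⟩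
      · exact Or.inr ⟨i, hi, by rw [← h]; ring⟩
    · rintro (⟨i, hi, h⟩ | ⟨i, hi, h⟩)
      · refine ⟨i, hi, ?_, Or.inl h⟩
        rw [← h]; intro hc
        exact h10 (by linear_combination -hc)
      · refine ⟨i, hi, ?_, Or.inr (by rw [← h]; ring)⟩
        rw [← h]; intro hc
        exact h10 (by linear_combination hc)
  have hcardA : A.card = I.card := card_image_of_injective _ (add_left_injective 1)
  rw [hnbhd]
  by_cases hsub : B ⊆ A
  · -- then I is closed under x ↦ x - 2, hence I = univ, contradiction
    exfalso
    have hclosed : ∀ i ∈ I, i - 2 ∈ I := by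
      intro i hi
      have : i - 1 ∈ A := hsub (mem_image_of_mem _ hi)
      rw [hA, mem_image] at this
      obtain ⟨j, hj, hj2⟩ := this
      have : j = i - 2 := by linear_combination hj2
      rwa [← this]
    obtain ⟨i0, hi0⟩ := hne
    have horbit : ∀ n : ℕ, i0 - 2 * n ∈ I := by
      intro n
      induction n with
      | zero => simpa using hi0
      | succ n ih =>
        have := hclosed _ ih
        have he : i0 - 2 * (n + 1 : ℕ) = i0 - 2 * (n : ℕ) - 2 := by push_cast; ring
        rwa [he]
    have huniv : ∀ a : ZMod N, a ∈ I := by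
      intro a
      have h2u : IsUnit (2 : ZMod N) := by
        have h := (ZMod.isUnit_iff_coprime 2 N).mpr
          (by simpa [Nat.coprime_two_left] using hodd)
        simpa using h
      obtain ⟨u, hu⟩ := h2u
      set c : ZMod N := (u⁻¹ : (ZMod N)ˣ) * (i0 - a) with hc
      have h2c : 2 * c = i0 - a := by
        rw [hc, ← hu, ← mul_assoc]
        simp
      have := horbit c.val
      have hv : ((c.val : ℕ) : ZMod N) = c := by
        simp [ZMod.natCast_val, ZMod.cast_id]
      rw [hv, h2c] at this
      simpa using this
    exact hind i0 hi0 (i0 + 1) (huniv _)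
      ⟨fun hc => h10 (by linear_combination -hc), Or.inl rfl⟩
  · rw [Finset.not_subset] at hsub
    obtain ⟨b, hbB, hbA⟩ := hsub
    have hins : insert b A ⊆ A ∪ B := by
      intro x hx
      rw [mem_insert] at hx
      rcases hx with rfl | hx
      · exact mem_union_right _ hbB
      · exact mem_union_left _ hx
    calc I.card + 1 = (insert b A).card := by rw [card_insert_of_notMem hbA, hcardA]
      _ ≤ (A ∪ B).card := card_le_card hins

/-- In an odd cycle `C_{2K+1}`, every nonempty independent set `I` satisfies
`|E(I)| ≥ |I| + 1`. -/
theorem stmt2 (K : ℕ) (hK : 1 ≤ K)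
    [DecidableRel (cycleGraph (2 * K + 1)).Adj]
    (I : Finset (ZMod (2 * K + 1))) (hne : I.Nonempty)
    (hind : IsIndep (cycleGraph (2 * K + 1)) I) :
    I.card + 1 ≤ (nbhd (cycleGraph (2 * K + 1)) I).card :=
  aux (2 * K + 1) (by omega) ⟨K, by omega⟩ I hne hind
end

section
/- Let G = (V, E) be a simple graph, α : V → ℝ_{>0}, and define the unnormalized measure ψ(c) = Π_{p=1}^n α_{c_p} / α(E(V(c_1, …, c_p))) on words c with independent letter sets. For each independent set I, let ψ(I) = Σ_{c : V(c) = I} ψ(c) (assumed finite). Then ψ satisfies the recursion ψ(I) · (α(E(I)) − α(I)) = Σ_{i ∈ I} α_i · ψ(I \ {i}), with ψ(∅) = 1, provided α(I) < α(E(I)). -/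
open Finset

/-- The product-form measure; lists store the newest item first, so that the list
`c_n :: ⋯ :: c_1 :: []` represents the state `(c_1, …, c_n)`. -/
noncomputable def piMeas {V : Type*} [Fintype V] [DecidableEq V] (G : SimpleGraph V)
    [DecidableRel G.Adj] (α : V → ℝ) : List V → ℝ
  | [] => 1
  | i :: c => piMeas G α c * (α i / ∑ j ∈ nbhd G ((i :: c).toFinset), α j)

/-- The fiber over `(i, b)`: tails with letter set `I` (if `b = true`) or
`I.erase i` (if `b = false`). -/
def Fib {V : Type*} [DecidableEq V] (I : Finset V) (p : {x // x ∈ I} × Bool) : Type _ :=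
  {c : List V // c.toFinset = cond p.2 I (I.erase p.1.1)}

def toWord {V : Type*} [DecidableEq V] (I : Finset V) :
    (Σ p : {x // x ∈ I} × Bool, Fib I p) → {c : List V // c.toFinset = I}
  | ⟨⟨⟨i, hi⟩, b⟩, ⟨c, hc⟩⟩ =>
    ⟨i :: c, by
      cases b <;> simp only [cond] at hc <;>
        simp [hc, Finset.insert_erase hi, Finset.insert_eq_self.2 hi]⟩

lemma toWord_bij {V : Type*} [DecidableEq V] (I : Finset V) (hne : I.Nonempty) :
    Function.Bijective (toWord I) := by
  constructor
  · rintro ⟨⟨⟨i, hi⟩, b⟩, ⟨c, hc⟩⟩ ⟨⟨⟨j, hj⟩, b'⟩, ⟨d, hd⟩⟩ hfeq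
    simp only [toWord, Subtype.mk.injEq, List.cons.injEq] at hfeq
    obtain ⟨rfl, rfl⟩ := hfeq
    have hb : b = b' := by
      cases b <;> cases b'
      · rfl
      · exfalso
        simp only [cond] at hc hd
        rw [hd] at hc
        exact (Finset.notMem_erase i I) (hc ▸ hi)
      · exfalso
        simp only [cond] at hc hd
        rw [hc] at hd
        exact (Finset.notMem_erase i I) (hd ▸ hi)
      · rfl
    subst hb
    rfl
  · rintro ⟨c, hc⟩
    cases c with
    | nil =>
      exfalso
      simp only [List.toFinset_nil] at hc
      exact hne.ne_empty hc.symm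
    | cons a t =>
      have ha : a ∈ I := by rw [← hc]; simp
      by_cases hat : a ∈ t.toFinset
      · have ht : t.toFinset = I := by
          rw [← hc, List.toFinset_cons, Finset.insert_eq_self.2 hat]
        exact ⟨⟨⟨⟨a, ha⟩, true⟩, ⟨t, ht⟩⟩, Subtype.ext rfl⟩
      · have ht : t.toFinset = I.erase a := by
          rw [← hc, List.toFinset_cons, Finset.erase_insert hat]
        exact ⟨⟨⟨⟨a, ha⟩, false⟩, ⟨t, ht⟩⟩, Subtype.ext rfl⟩

/-- The aggregated measure `ψ(I) = Σ_{c : V(c) = I} ψ(c)` satisfies the recursion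
`ψ(I) (α(E(I)) − α(I)) = Σ_{i ∈ I} α_i ψ(I \ {i})` when `α(I) < α(E(I))`. -/
theorem stmt9 {V : Type*} [Fintype V] [DecidableEq V] (G : SimpleGraph V) [DecidableRel G.Adj]
    (α : V → ℝ) (hα : ∀ i, 0 < α i)
    (I : Finset V) (hne : I.Nonempty) (hind : IsIndep G I)
    (hstab : ∑ i ∈ I, α i < ∑ j ∈ nbhd G I, α j)
    (hsum : ∀ J ⊆ I, Summable (fun c : {c : List V // c.toFinset = J} => piMeas G α c.1)) :
    (∑' c : {c : List V // c.toFinset = I}, piMeas G α c.1)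
        * ((∑ j ∈ nbhd G I, α j) - ∑ i ∈ I, α i)
      = ∑ i ∈ I, α i * ∑' c : {c : List V // c.toFinset = I.erase i}, piMeas G α c.1 := by
  classical
  obtain ⟨ψ, hψ⟩ : ∃ ψ : Finset V → ℝ,
      ∀ J, ψ J = ∑' c : {c : List V // c.toFinset = J}, piMeas G α c.1 :=
    ⟨_, fun _ => rfl⟩
  simp only [← hψ]
  set S : ℝ := ∑ j ∈ nbhd G I, α j with hSdef
  have hαI : 0 < ∑ i ∈ I, α i := Finset.sum_pos (fun i _ => hα i) hne
  have hSpos : 0 < S := lt_trans hαI hstab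
  have hS0 : S ≠ 0 := ne_of_gt hSpos
  -- the equivalence
  let e : (Σ p : {x // x ∈ I} × Bool, Fib I p) ≃ {c : List V // c.toFinset = I} :=
    Equiv.ofBijective (toWord I) (toWord_bij I hne)
  -- unfolding piMeas along toWord
  have hpi : ∀ x : Σ p : {x // x ∈ I} × Bool, Fib I p,
      piMeas G α (toWord I x).1 = piMeas G α x.2.1 * (α x.1.1.1 / S) := by
    rintro ⟨⟨⟨i, hi⟩, b⟩, ⟨c, hc⟩⟩
    have hfin : ((i :: c).toFinset : Finset V) = I := by
      cases b <;> simp only [cond] at hc <;>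
        simp [hc, Finset.insert_erase hi, Finset.insert_eq_self.2 hi]
    show piMeas G α (i :: c) = piMeas G α c * (α i / S)
    rw [piMeas, hfin]
  -- summability through the equivalence
  have hsumI : Summable (fun c : {c : List V // c.toFinset = I} => piMeas G α c.1) :=
    hsum I subset_rfl
  have hsumSig : Summable (fun x : Σ p : {x // x ∈ I} × Bool, Fib I p =>
      piMeas G α (toWord I x).1) :=
    (e.summable_iff (f := fun c : {c : List V // c.toFinset = I} => piMeas G α c.1)).2 hsumI
  -- inner tsums
  have htsum_fiber : ∀ p : {x // x ∈ I} × Bool,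
      (∑' c : Fib I p, piMeas G α c.1) = ψ (cond p.2 I (I.erase p.1.1)) := by
    rintro ⟨⟨i, hi⟩, b⟩
    cases b
    · exact (hψ (I.erase i)).symm
    · exact (hψ I).symm
  have hsum_fiber : ∀ p : {x // x ∈ I} × Bool,
      Summable (fun c : Fib I p => piMeas G α c.1) := by
    rintro ⟨⟨i, hi⟩, b⟩
    cases b
    · exact hsum (I.erase i) (Finset.erase_subset _ _)
    · exact hsum I subset_rfl
  -- main decomposition
  have hmain : ψ I = ∑ i ∈ I, (ψ I * (α i / S) + ψ (I.erase i) * (α i / S)) := by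
    have h1 : ψ I = ∑' x : Σ p : {x // x ∈ I} × Bool, Fib I p,
        piMeas G α (toWord I x).1 := by
      rw [hψ I]
      exact (e.tsum_eq (fun c : {c : List V // c.toFinset = I} => piMeas G α c.1)).symm
    conv_lhs => rw [h1]
    rw [hsumSig.tsum_sigma, tsum_fintype]
    have h2 : ∀ p : {x // x ∈ I} × Bool,
        (∑' c : Fib I p, piMeas G α (toWord I ⟨p, c⟩).1)
          = ψ (cond p.2 I (I.erase p.1.1)) * (α p.1.1 / S) := by
      intro p
      have h3 : (∑' c : Fib I p, piMeas G α (toWord I ⟨p, c⟩).1)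
          = ∑' c : Fib I p, piMeas G α c.1 * (α p.1.1 / S) :=
        tsum_congr fun c => hpi ⟨p, c⟩
      rw [h3, (hsum_fiber p).tsum_mul_right, htsum_fiber p]
    rw [Finset.sum_congr rfl (fun p _ => h2 p), Fintype.sum_prod_type]
    simp only [Fintype.sum_bool, Bool.cond_true, Bool.cond_false]
    exact Finset.sum_coe_sort I (fun v => ψ I * (α v / S) + ψ (I.erase v) * (α v / S))
  -- algebra
  have h2 : ψ I * S = ∑ i ∈ I, (ψ I * α i + ψ (I.erase i) * α i) := by
    conv_lhs => rw [hmain]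
    rw [Finset.sum_mul]
    refine Finset.sum_congr rfl fun i _ => ?_
    field_simp
  calc ψ I * (S - ∑ i ∈ I, α i)
      = ψ I * S - ψ I * ∑ i ∈ I, α i := by ring
    _ = ∑ i ∈ I, α i * ψ (I.erase i) := by
        rw [h2, Finset.sum_add_distrib, Finset.mul_sum, add_sub_cancel_left]
        exact Finset.sum_congr rfl fun i _ => mul_comm _ _
end

section
/- Let Ind denote the finite set of nonempty independent sets of a simple graph G = (V, E), and let α : V → ℝ_{>0} satisfy α(I) < α(E(I)) for all I ∈ Ind. Define ψ(∅) = 1 and ψ(I) = (Σ_{i ∈ I} α_i ψ(I \ {i})) / (α(E(I)) − α(I)) recursively over independent sets. Then ψ(I) > 0 for every independent set I, and the normalized values π(I) = ψ(I) / Σ_{J} ψ(J) define a probability distribution on Ind ∪ {∅}. -/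
open Finset

/-- `ψ(∅) = 1` and `ψ(I) = (Σ_{i ∈ I} α_i ψ(I \ {i})) / (α(E(I)) − α(I))`. -/
noncomputable def psiRec {V : Type*} [Fintype V] [DecidableEq V] (G : SimpleGraph V)
    [DecidableRel G.Adj] (α : V → ℝ) (I : Finset V) : ℝ :=
  if I = ∅ then 1
  else (∑ i ∈ I.attach, α i.1 * psiRec G α (I.erase i.1)) /
    ((∑ j ∈ nbhd G I, α j) - ∑ i ∈ I, α i)
termination_by I.card
decreasing_by exact Finset.card_erase_lt_of_mem i.2

lemma psiRec_pos {V : Type*} [Fintype V] [DecidableEq V] (G : SimpleGraph V)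
    [DecidableRel G.Adj] (α : V → ℝ) (hα : ∀ i, 0 < α i)
    (hstab : ∀ I : Finset V, I.Nonempty → IsIndep G I →
      ∑ i ∈ I, α i < ∑ j ∈ nbhd G I, α j) :
    ∀ I : Finset V, IsIndep G I → 0 < psiRec G α I := by
  intro I
  induction I using Finset.strongInduction with
  | _ I ih =>
    intro hI
    rw [psiRec]
    by_cases h : I = ∅
    · simp [h]
    · rw [if_neg h]
      apply div_pos
      · apply Finset.sum_pos
        · intro i _
          exact mul_pos (hα i.1) (ih _ (Finset.erase_ssubset i.2)
            (fun a ha b hb => hI a (Finset.mem_of_mem_erase ha) b (Finset.mem_of_mem_erase hb)))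
        · simpa [Finset.attach_nonempty_iff] using Finset.nonempty_iff_ne_empty.2 h
      · linarith [hstab I (Finset.nonempty_iff_ne_empty.2 h) hI]

/-- Under the stability condition, `ψ(I) > 0` for every independent set `I`, and the
normalized values `π(I) = ψ(I)/Σ_J ψ(J)` form a probability distribution on the
independent sets together with `∅`. -/
theorem stmt10 {V : Type*} [Fintype V] [DecidableEq V] (G : SimpleGraph V) [DecidableRel G.Adj]
    [DecidablePred (IsIndep G)]
    (α : V → ℝ) (hα : ∀ i, 0 < α i)
    (hstab : ∀ I : Finset V, I.Nonempty → IsIndep G I →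
      ∑ i ∈ I, α i < ∑ j ∈ nbhd G I, α j)
    (S : Finset (Finset V))
    (hS : S = (Finset.univ : Finset (Finset V)).filter (fun I => I = ∅ ∨ IsIndep G I))
    (π : Finset V → ℝ) (hπ : ∀ I, π I = psiRec G α I / ∑ J ∈ S, psiRec G α J) :
    (∀ I : Finset V, IsIndep G I → 0 < psiRec G α I) ∧
    (∀ I ∈ S, 0 ≤ π I) ∧ ∑ I ∈ S, π I = 1 := by
  have hpos := psiRec_pos G α hα hstab
  have hSind : ∀ I ∈ S, IsIndep G I := by
    intro I hI
    rw [hS, Finset.mem_filter] at hI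
    rcases hI.2 with rfl | h
    · intro a ha; simp at ha
    · exact h
  have hne : (∅ : Finset V) ∈ S := by
    rw [hS]; simp
  have hsum : 0 < ∑ J ∈ S, psiRec G α J :=
    Finset.sum_pos (fun J hJ => hpos J (hSind J hJ)) ⟨∅, hne⟩
  refine ⟨hpos, fun I hI => ?_, ?_⟩
  · rw [hπ]
    exact le_of_lt (div_pos (hpos I (hSind I hI)) hsum)
  · simp only [hπ]
    rw [← Finset.sum_div, div_self (ne_of_gt hsum)]
end
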